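/- If n is an integer with n ≡ 1 (mod 3) and T_R^*(n) ≡ 1 (mod 3), then n ≡ 106 (mod 192) and |T_R^*(n)| < |n|. -/
import Mathlib


/-- The accelerated refined map `T_R^*`. -/
def TRstar (n : ℤ) : ℤ :=
  if n % 2 = 1 then (3 * n + 1) / 2
  else if n % 4 = 0 then 3 * n / 4
  else if n % 8 = 6 then (3 * n - 2) / 8
  else if n % 16 = 2 then (3 * n - 6) / 16
  else if n % 32 = 26 then (3 * n - 14) / 32
  else if n % 64 = 10 then (3 * n - 30) / 64
  else (n - 42) / 64

theorem stmt_14 (n : ℤ) (h1 : n % 3 = 1) (h2 : TRstar n % 3 = 1) :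
    n % 192 = 106 ∧ |TRstar n| < |n| := by
  unfold TRstar at h2 ⊢
  split_ifs at h2 ⊢ <;>
  first
    | omega
    | (refine ⟨by omega, ?_⟩
       rcases abs_cases ((n - 42) / 64) with ⟨e1, _⟩ | ⟨e1, _⟩ <;>
         rcases abs_cases n with ⟨e2, _⟩ | ⟨e2, _⟩ <;> rw [e1, e2] <;> omega)
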